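/- arXiv:2505.02620 — 2 statements merged into one kernel-verified Lean document; each statement's English description precedes it below -/
import Mathlib

section
/- Let O be a Hermitian operator on H with ‖O‖_∞ ≤ o, let σ, σ′ be states on H^{⊗m} with D(σ,σ′) ≤ ε, and let Ō = (1/m) Σ_{j=1}^m O_j be the averaged observable. Define Δ²_{σ₀,σ} Ō = Tr[(Ō − Tr[Ōσ₀]·I)² σ]. Then |Δ²_{σ,σ} Ō − Δ²_{σ,σ′} Ō| ≤ 4o²(2ε + ε²). -/
open Matrix
open scoped ComplexOrder Kronecker

set_option maxHeartbeats 1000000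

/-- Schatten 1-norm (trace norm) of a complex matrix: sum of its singular values. -/
noncomputable def traceNorm {ι : Type*} [Fintype ι] [DecidableEq ι]
    (M : Matrix ι ι ℂ) : ℝ :=
  ∑ i, Real.sqrt ((Matrix.posSemidef_conjTranspose_mul_self M).1.eigenvalues i)

/-- Trace distance `D(A,B) = ‖A - B‖₁ / 2`. -/
noncomputable def traceDist {ι : Type*} [Fintype ι] [DecidableEq ι]
    (A B : Matrix ι ι ℂ) : ℝ :=
  traceNorm (A - B) / 2

/-- A quantum state: a positive semidefinite matrix of trace one. -/
def IsState {ι : Type*} [Fintype ι] [DecidableEq ι] (ρ : Matrix ι ι ℂ) : Prop :=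
  ρ.PosSemidef ∧ ρ.trace = 1

/-- Operator norm (largest singular value) of a complex matrix. -/
noncomputable def opNorm {ι : Type*} [Fintype ι] [DecidableEq ι]
    (M : Matrix ι ι ℂ) : ℝ :=
  ⨆ i, Real.sqrt ((Matrix.posSemidef_conjTranspose_mul_self M).1.eigenvalues i)

/-- The single-site observable `O_j` acting on the `j`-th tensor factor of `H^{⊗ m}`. -/
def embedAt {d m : ℕ} (j : Fin m) (O : Matrix (Fin d) (Fin d) ℂ) :
    Matrix (Fin m → Fin d) (Fin m → Fin d) ℂ :=
  fun x y => O (x j) (y j) * ∏ i ∈ Finset.univ.erase j, (if x i = y i then 1 else 0)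

/-- The averaged observable `Ō = (1/m) Σ_j O_j`. -/
noncomputable def avgObs {d m : ℕ} (O : Matrix (Fin d) (Fin d) ℂ) :
    Matrix (Fin m → Fin d) (Fin m → Fin d) ℂ :=
  ((m : ℂ)⁻¹) • ∑ j, embedAt j O

/-- The (centered) second moment `Δ²_{σ₀,σ} Ō = Tr[(Ō − Tr[Ōσ₀]·I)² σ]`. -/
noncomputable def deltaSq {ι : Type*} [Fintype ι] [DecidableEq ι]
    (Obar σ₀ σ : Matrix ι ι ℂ) : ℂ :=
  (((Obar - (Obar * σ₀).trace • (1 : Matrix ι ι ℂ)) ^ 2) * σ).trace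

section Aux

open scoped Matrix.Norms.L2Operator

set_option linter.unusedSectionVars false
set_option linter.unusedVariables false

variable {n : Type*} [Fintype n] [DecidableEq n]

lemma opNorm_nonneg' (M : Matrix n n ℂ) : 0 ≤ opNorm M :=
  Real.iSup_nonneg fun i => Real.sqrt_nonneg _

lemma euclid_norm_sq (v : n → ℂ) :
    ‖(WithLp.equiv 2 (n → ℂ)).symm v‖ ^ 2 = ∑ i, Complex.normSq (v i) := by
  rw [EuclideanSpace.norm_eq, Real.sq_sqrt (by positivity)]
  refine Finset.sum_congr rfl fun i _ => ?_
  simp [Complex.sq_norm]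

lemma dot_star_self (v : n → ℂ) :
    star v ⬝ᵥ v = ((∑ i, Complex.normSq (v i) : ℝ) : ℂ) := by
  push_cast
  simp [dotProduct, Complex.normSq_eq_conj_mul_self]

lemma opNorm_nonneg (M : Matrix n n ℂ) : 0 ≤ opNorm M :=
  Real.iSup_nonneg fun i => Real.sqrt_nonneg _

lemma quad_bound (M : Matrix n n ℂ) (v : n → ℂ) :
    ∑ i, Complex.normSq ((M *ᵥ v) i) ≤ opNorm M ^ 2 * ∑ i, Complex.normSq (v i) := by
  classical
  set hN := Matrix.posSemidef_conjTranspose_mul_self M with hNdef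
  set U : Matrix n n ℂ := (hN.1.eigenvectorUnitary : Matrix n n ℂ) with hU
  set μ := hN.1.eigenvalues with hμ
  set y : n → ℂ := star U *ᵥ v with hy
  have hstary : star y = star v ᵥ* U := by
    rw [hy, star_mulVec, star_eq_conjTranspose, conjTranspose_conjTranspose]
  have hUU : star U * U = 1 := Matrix.UnitaryGroup.star_mul_self _
  have hUU' : U * star U = 1 := Matrix.mem_unitaryGroup_iff.mp hN.1.eigenvectorUnitary.2
  -- ∑ normSq (M v) as a dot product
  have h1 : ((∑ i, Complex.normSq ((M *ᵥ v) i) : ℝ) : ℂ)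
      = star y ⬝ᵥ (diagonal (Complex.ofReal ∘ μ) *ᵥ y) := by
    rw [← dot_star_self, star_mulVec, dotProduct_mulVec, vecMul_vecMul,
      ← Matrix.dotProduct_mulVec]
    have hsp : Mᴴ * M = U * diagonal (Complex.ofReal ∘ μ) * star U :=
      hN.1.spectral_theorem
    rw [hsp, ← mulVec_mulVec, ← mulVec_mulVec, dotProduct_mulVec (star v) U, ← hstary,
      dotProduct_mulVec, hy]
  have h2 : star y ⬝ᵥ (diagonal (Complex.ofReal ∘ μ) *ᵥ y)
      = ((∑ i, μ i * Complex.normSq (y i) : ℝ) : ℂ) := by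
    push_cast
    simp only [dotProduct, mulVec_diagonal, Pi.star_apply, Function.comp]
    refine Finset.sum_congr rfl fun i _ => ?_
    rw [Complex.star_def, show (starRingEnd ℂ) (y i) * ((μ i : ℂ) * y i)
        = (μ i : ℂ) * ((starRingEnd ℂ) (y i) * y i) by ring,
      ← Complex.normSq_eq_conj_mul_self]
  have hynorm : ∑ i, Complex.normSq (y i) = ∑ i, Complex.normSq (v i) := by
    have : star y ⬝ᵥ y = star v ⬝ᵥ v := by
      rw [hstary, hy, dotProduct_mulVec, vecMul_vecMul, hUU', vecMul_one]
    have h3 := (dot_star_self y).symm.trans (this.trans (dot_star_self v))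
    exact_mod_cast h3
  have hkey : ((∑ i, Complex.normSq ((M *ᵥ v) i) : ℝ) : ℂ)
      = ((∑ i, μ i * Complex.normSq (y i) : ℝ) : ℂ) := h1.trans h2
  have hkey' : ∑ i, Complex.normSq ((M *ᵥ v) i) = ∑ i, μ i * Complex.normSq (y i) := by
    exact_mod_cast hkey
  rw [hkey', ← hynorm, Finset.mul_sum]
  refine Finset.sum_le_sum fun i _ => ?_
  have hμnn : 0 ≤ μ i := hN.eigenvalues_nonneg i
  have hle : Real.sqrt (μ i) ≤ opNorm M := by
    rw [opNorm]
    exact le_ciSup (f := fun i => Real.sqrt (hN.1.eigenvalues i))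
      (Set.Finite.bddAbove (Set.finite_range _)) i
  have : μ i ≤ opNorm M ^ 2 := by
    have := mul_self_le_mul_self (Real.sqrt_nonneg (μ i)) hle
    rwa [Real.mul_self_sqrt hμnn, ← pow_two] at this
  exact mul_le_mul_of_nonneg_right this (Complex.normSq_nonneg _)

lemma matrix_norm_le_opNorm (M : Matrix n n ℂ) : ‖M‖ ≤ opNorm M := by
  rw [Matrix.cstar_norm_def]
  refine ContinuousLinearMap.opNorm_le_bound _ (opNorm_nonneg' M) fun x => ?_
  set v : n → ℂ := WithLp.equiv 2 (n → ℂ) x with hv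
  have hx : x = (WithLp.equiv 2 (n → ℂ)).symm v := by simp [hv]
  have h1 : ‖toEuclideanCLM (𝕜 := ℂ) M x‖ ^ 2 = ∑ i, Complex.normSq ((M *ᵥ v) i) := by
    rw [hx, show toEuclideanCLM (𝕜 := ℂ) M ((WithLp.equiv 2 (n → ℂ)).symm v)
      = (WithLp.equiv 2 (n → ℂ)).symm (M *ᵥ v) from rfl, euclid_norm_sq]
  have h2 : ‖x‖ ^ 2 = ∑ i, Complex.normSq (v i) := by rw [hx, euclid_norm_sq]
  have hsq : ‖toEuclideanCLM (𝕜 := ℂ) M x‖ ^ 2 ≤ (opNorm M * ‖x‖) ^ 2 := by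
    rw [mul_pow, h1, h2]; exact quad_bound M v
  exact le_of_pow_le_pow_left₀ two_ne_zero (mul_nonneg (opNorm_nonneg' M) (norm_nonneg x)) hsq

lemma norm_mulVec_le (M : Matrix n n ℂ) (v : n → ℂ) :
    ∑ i, Complex.normSq ((M *ᵥ v) i) ≤ ‖M‖ ^ 2 * ∑ i, Complex.normSq (v i) := by
  have h : ‖(WithLp.equiv 2 (n → ℂ)).symm (M *ᵥ v)‖
      ≤ ‖M‖ * ‖(WithLp.equiv 2 (n → ℂ)).symm v‖ :=
    M.l2_opNorm_mulVec ((WithLp.equiv 2 (n → ℂ)).symm v)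
  have hsq := mul_self_le_mul_self (norm_nonneg _) h
  rw [← pow_two, ← pow_two] at hsq
  rw [euclid_norm_sq, mul_pow, euclid_norm_sq] at hsq
  exact hsq

lemma abs_dot_quad (A : Matrix n n ℂ) (u : n → ℂ) :
    ‖star u ⬝ᵥ (A *ᵥ u)‖ ≤ ‖A‖ * ∑ p, Complex.normSq (u p) := by
  set x : EuclideanSpace ℂ n := (WithLp.equiv 2 (n → ℂ)).symm u with hxdef
  have h1 : (inner ℂ x (toEuclideanCLM (𝕜 := ℂ) A x) : ℂ) = star u ⬝ᵥ (A *ᵥ u) := by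
    rw [hxdef, show toEuclideanCLM (𝕜 := ℂ) A ((WithLp.equiv 2 (n → ℂ)).symm u)
      = (WithLp.equiv 2 (n → ℂ)).symm (A *ᵥ u) from rfl]
    simp [PiLp.inner_apply, dotProduct, RCLike.inner_apply]
    exact Finset.sum_congr rfl fun i _ => mul_comm _ _
  have hA : ‖toEuclideanCLM (𝕜 := ℂ) A x‖ ≤ ‖A‖ * ‖x‖ := by
    have := (toEuclideanCLM (𝕜 := ℂ) A).le_opNorm x
    rwa [← Matrix.cstar_norm_def] at this
  calc ‖star u ⬝ᵥ (A *ᵥ u)‖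
      = ‖(inner ℂ x (toEuclideanCLM (𝕜 := ℂ) A x) : ℂ)‖ := by
        rw [h1]
    _ ≤ ‖x‖ * ‖toEuclideanCLM (𝕜 := ℂ) A x‖ := norm_inner_le_norm _ _
    _ ≤ ‖x‖ * (‖A‖ * ‖x‖) := by
        exact mul_le_mul_of_nonneg_left hA (norm_nonneg _)
    _ = ‖A‖ * ‖x‖ ^ 2 := by ring
    _ = ‖A‖ * ∑ p, Complex.normSq (u p) := by rw [hxdef, euclid_norm_sq]

lemma trace_conj_diag (U : Matrix n n ℂ) (hUU : star U * U = 1) (d : n → ℂ) :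
    (U * diagonal d * star U).trace = ∑ i, d i := by
  rw [Matrix.trace_mul_comm, ← Matrix.mul_assoc, hUU, Matrix.one_mul, Matrix.trace_diagonal]

lemma col_normSq_one {U : Matrix n n ℂ} (hUU : star U * U = 1) (i : n) :
    ∑ p, Complex.normSq (U p i) = 1 := by
  have h : (star U * U) i i = (1 : Matrix n n ℂ) i i := by rw [hUU]
  have h2 : (star U * U) i i = ((∑ p, Complex.normSq (U p i) : ℝ) : ℂ) := by
    push_cast
    simp [Matrix.mul_apply, Matrix.star_apply, Complex.normSq_eq_conj_mul_self,
      Complex.star_def]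
  rw [h2, Matrix.one_apply_eq] at h
  exact_mod_cast h

lemma holder_bound (A : Matrix n n ℂ) {M : Matrix n n ℂ} (hM : M.IsHermitian) :
    ‖(A * M).trace‖ ≤ ‖A‖ * ∑ i, |hM.eigenvalues i| := by
  set U : Matrix n n ℂ := (hM.eigenvectorUnitary : Matrix n n ℂ) with hU
  set lam : n → ℝ := hM.eigenvalues with hlam
  have hUU : star U * U = 1 := Matrix.UnitaryGroup.star_mul_self _
  have htr : (A * M).trace = ∑ i, (star U * A * U) i i * (lam i : ℂ) := by
    conv_lhs => rw [hM.spectral_theorem, Unitary.conjStarAlgAut_apply]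
    rw [← Matrix.mul_assoc, Matrix.trace_mul_comm, ← Matrix.mul_assoc, ← Matrix.mul_assoc]
    rw [Matrix.trace]
    refine Finset.sum_congr rfl fun i _ => ?_
    rw [Matrix.diag_apply, Matrix.mul_diagonal]
    rfl
  have hcol : ∀ i, (star U * A * U) i i
      = star (fun p => U p i) ⬝ᵥ (A *ᵥ (fun p => U p i)) := by
    intro i
    simp only [Matrix.mul_apply, dotProduct, Matrix.mulVec, Matrix.star_apply,
      Pi.star_apply, Finset.sum_mul, Finset.mul_sum]
    rw [Finset.sum_comm]
    exact Finset.sum_congr rfl fun p _ => Finset.sum_congr rfl fun q _ => by ring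
  have hbd : ∀ i, ‖(star U * A * U) i i‖ ≤ ‖A‖ := by
    intro i
    rw [hcol i]
    have := abs_dot_quad A (fun p => U p i)
    rwa [col_normSq_one hUU i, mul_one] at this
  calc ‖(A * M).trace‖
      = ‖∑ i, (star U * A * U) i i * (lam i : ℂ)‖ := by rw [htr]
    _ ≤ ∑ i, ‖(star U * A * U) i i * (lam i : ℂ)‖ :=
        norm_sum_le _ _
    _ ≤ ∑ i, ‖A‖ * |lam i| := by
        refine Finset.sum_le_sum fun i _ => ?_
        rw [norm_mul, Complex.norm_real, Real.norm_eq_abs]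
        exact mul_le_mul_of_nonneg_right (hbd i) (abs_nonneg _)
    _ = ‖A‖ * ∑ i, |lam i| := by rw [← Finset.mul_sum]

lemma trace_eq_sum_eig {M : Matrix n n ℂ} (hM : M.IsHermitian) :
    M.trace = ((∑ i, hM.eigenvalues i : ℝ) : ℂ) := by
  conv_lhs => rw [hM.spectral_theorem, Unitary.conjStarAlgAut_apply]
  rw [trace_conj_diag _ (Matrix.UnitaryGroup.star_mul_self _)]
  push_cast
  rfl

lemma conj_mul_conj (U : Matrix n n ℂ) (hUU : star U * U = 1) (d e : n → ℂ) :
    (U * diagonal d * star U) * (U * diagonal e * star U)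
      = U * diagonal (fun i => d i * e i) * star U := by
  rw [Matrix.mul_assoc (U * diagonal d) (star U) _,
    ← Matrix.mul_assoc (star U) (U * diagonal e) (star U),
    ← Matrix.mul_assoc (star U) U (diagonal e), hUU, Matrix.one_mul,
    ← Matrix.mul_assoc (U * diagonal d) (diagonal e) (star U),
    Matrix.mul_assoc U (diagonal d) (diagonal e), Matrix.diagonal_mul_diagonal]

open scoped MatrixOrder in
lemma sum_abs_eig_le_traceNorm {M : Matrix n n ℂ} (hM : M.IsHermitian) :
    ∑ i, |hM.eigenvalues i| ≤ traceNorm M := by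
  classical
  set hN := Matrix.posSemidef_conjTranspose_mul_self M with hNdef
  set U : Matrix n n ℂ := (hM.eigenvectorUnitary : Matrix n n ℂ) with hU
  set lam : n → ℝ := hM.eigenvalues with hlam
  have hUU : star U * U = 1 := Matrix.UnitaryGroup.star_mul_self _
  set B : Matrix n n ℂ := U * diagonal ((RCLike.ofReal : ℝ → ℂ) ∘ fun i => |lam i|) * star U with hB
  have hBpsd : B.PosSemidef := by
    rw [hB, star_eq_conjTranspose]
    exact (Matrix.posSemidef_diagonal_iff.mpr fun i =>
      RCLike.ofReal_nonneg.mpr (abs_nonneg _)).mul_mul_conjTranspose_same U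
  have hB2 : B ^ 2 = Mᴴ * M := by
    have hMM : Mᴴ * M = M * M := by rw [hM.eq]
    rw [hMM]
    conv_rhs => rw [hM.spectral_theorem, Unitary.conjStarAlgAut_apply]
    rw [hB, pow_two, conj_mul_conj U hUU, conj_mul_conj U hUU]
    have hfun : (fun i => ((RCLike.ofReal : ℝ → ℂ) ∘ fun i => |lam i|) i
          * ((RCLike.ofReal : ℝ → ℂ) ∘ fun i => |lam i|) i)
        = fun i => ((RCLike.ofReal : ℝ → ℂ) ∘ hM.eigenvalues) i * ((RCLike.ofReal : ℝ → ℂ) ∘ hM.eigenvalues) i := by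
      funext i
      simp only [Function.comp_apply]
      rw [← RCLike.ofReal_mul, ← RCLike.ofReal_mul, abs_mul_abs_self, hlam]
    rw [hfun]
  have hBsqrt : B = CFC.sqrt (Mᴴ * M) := by
    rw [← hB2]; exact (CFC.sqrt_sq B (Matrix.nonneg_iff_posSemidef.mpr hBpsd)).symm
  have htrB : B.trace = ((∑ i, |lam i| : ℝ) : ℂ) := by
    rw [hB, trace_conj_diag U hUU]
    exact (Complex.ofReal_sum _ _).symm
  have htrS : (CFC.sqrt (Mᴴ * M)).trace = ((∑ i, Real.sqrt (hN.1.eigenvalues i) : ℝ) : ℂ) := by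
    rw [CFC.sqrt_eq_real_sqrt _ (Matrix.nonneg_iff_posSemidef.mpr hN), cfcₙ_eq_cfc, hN.1.cfc_eq,
      IsHermitian.cfc, Unitary.conjStarAlgAut_apply]
    rw [trace_conj_diag _ (Matrix.UnitaryGroup.star_mul_self _)]
    exact (Complex.ofReal_sum _ _).symm
  have hEq := htrB.symm.trans ((congrArg Matrix.trace hBsqrt).trans htrS)
  have hreal : ∑ i, |lam i| = ∑ i, Real.sqrt (hN.1.eigenvalues i) := by exact_mod_cast hEq
  rw [traceNorm]
  exact le_of_eq hreal

lemma embedAt_isHermitian {d m : ℕ} (j : Fin m) {O : Matrix (Fin d) (Fin d) ℂ}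
    (hO : O.IsHermitian) : (embedAt j O).IsHermitian := by
  refine Matrix.ext fun x y => ?_
  rw [conjTranspose_apply]
  show star (O (y j) (x j) * ∏ i ∈ Finset.univ.erase j, (if y i = x i then 1 else 0))
    = O (x j) (y j) * ∏ i ∈ Finset.univ.erase j, (if x i = y i then 1 else 0)
  rw [star_mul', star_prod]
  congr 1
  · conv_rhs => rw [← hO]
    rw [conjTranspose_apply]
  · refine Finset.prod_congr rfl fun i _ => ?_
    rw [apply_ite (star : ℂ → ℂ), star_one, star_zero]
    simp [eq_comm]

lemma embedAt_mulVec {d m : ℕ} (j : Fin m) (O : Matrix (Fin d) (Fin d) ℂ)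
    (w : (Fin m → Fin d) → ℂ) (v : Fin m → Fin d) :
    (embedAt j O *ᵥ w) v
      = ∑ k, O (v j) k * w ((Equiv.piSplitAt j (fun _ => Fin d)).symm
          (k, fun i => v i)) := by
  classical
  set e := Equiv.piSplitAt j (fun _ : Fin m => Fin d) with he
  have hj : ∀ (k : Fin d) (u : {i : Fin m // i ≠ j} → Fin d), e.symm (k, u) j = k := by
    intro k u
    simp [he, Equiv.piSplitAt_symm_apply]
  have hi : ∀ (k : Fin d) (u : {i : Fin m // i ≠ j} → Fin d) (i : Fin m) (hij : i ≠ j),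
      e.symm (k, u) i = u ⟨i, hij⟩ := by
    intro k u i hij
    simp [he, Equiv.piSplitAt_symm_apply, hij]
  show ∑ y, embedAt j O v y * w y = _
  rw [← Equiv.sum_comp e.symm (fun y => embedAt j O v y * w y), Fintype.sum_prod_type]
  refine Finset.sum_congr rfl fun k _ => ?_
  have hterm : ∀ u : {i : Fin m // i ≠ j} → Fin d,
      embedAt j O v (e.symm (k, u))
        = O (v j) k * (if (fun i : {i : Fin m // i ≠ j} => v i) = u then 1 else 0) := by
    intro u
    show O (v j) (e.symm (k, u) j)
        * ∏ i ∈ Finset.univ.erase j, (if v i = e.symm (k, u) i then (1:ℂ) else 0)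
      = _
    rw [hj]
    congr 1
    rw [Finset.prod_subtype (p := fun i : Fin m => i ≠ j) (F := Subtype.fintype _) (Finset.univ.erase j)
      (fun i => by simp [Finset.mem_erase])
      (fun i => if v i = e.symm (k, u) i then (1:ℂ) else 0)]
    have : ∀ i : {i : Fin m // i ≠ j},
        (if v i = e.symm (k, u) i then (1:ℂ) else 0) = (if v i = u i then (1:ℂ) else 0) := by
      intro i
      rw [hi k u i i.2]
    rw [Finset.prod_congr rfl fun i _ => this i, Finset.prod_boole]
    have hcond : (∀ i : {i : Fin m // i ≠ j}, i ∈ Finset.univ → v i = u i)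
        ↔ ((fun i : {i : Fin m // i ≠ j} => v i) = u) := by
      rw [funext_iff]; simp
    simp only [hcond]
  calc ∑ u, embedAt j O v (e.symm (k, u)) * w (e.symm (k, u))
      = ∑ u, (if (fun i : {i : Fin m // i ≠ j} => v i) = u then
          O (v j) k * w (e.symm (k, u)) else 0) := by
        refine Finset.sum_congr rfl fun u _ => ?_
        rw [hterm u]
        by_cases h : (fun i : {i : Fin m // i ≠ j} => v i) = u <;> simp [h]
    _ = O (v j) k * w (e.symm (k, fun i => v i)) := by
        rw [Finset.sum_ite_eq]
        simp

lemma embedAt_normSq_le {d m : ℕ} (j : Fin m) (O : Matrix (Fin d) (Fin d) ℂ)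
    (w : (Fin m → Fin d) → ℂ) :
    ∑ v, Complex.normSq ((embedAt j O *ᵥ w) v)
      ≤ ‖O‖ ^ 2 * ∑ v, Complex.normSq (w v) := by
  classical
  set e := Equiv.piSplitAt j (fun _ : Fin m => Fin d) with he
  have hre : ∀ f : (Fin m → Fin d) → ℝ, ∑ v, f v = ∑ u, ∑ k, f (e.symm (k, u)) := by
    intro f
    rw [← Equiv.sum_comp e.symm f, Fintype.sum_prod_type, Finset.sum_comm]
  rw [hre (fun v => Complex.normSq ((embedAt j O *ᵥ w) v)),
    hre (fun v => Complex.normSq (w v)), Finset.mul_sum]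
  refine Finset.sum_le_sum fun u _ => ?_
  have hterm : ∀ k : Fin d, (embedAt j O *ᵥ w) (e.symm (k, u))
      = (O *ᵥ fun k' => w (e.symm (k', u))) k := by
    intro k
    rw [embedAt_mulVec]
    have h1 : e.symm (k, u) j = k := by simp [he, Equiv.piSplitAt_symm_apply]
    have h2 : (fun i : {i : Fin m // i ≠ j} => e.symm (k, u) i) = u := by
      funext i
      have hne : (i : Fin m) ≠ j := i.2
      simp [he, Equiv.piSplitAt_symm_apply, hne]
    rw [h1, h2]
    rfl
  calc ∑ k, Complex.normSq ((embedAt j O *ᵥ w) (e.symm (k, u)))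
      = ∑ k, Complex.normSq ((O *ᵥ fun k' => w (e.symm (k', u))) k) := by
        exact Finset.sum_congr rfl fun k _ => by rw [hterm k]
    _ ≤ ‖O‖ ^ 2 * ∑ k, Complex.normSq (w (e.symm (k, u))) :=
        norm_mulVec_le O _

lemma norm_embedAt_le {d m : ℕ} (j : Fin m) (O : Matrix (Fin d) (Fin d) ℂ) :
    ‖embedAt j O‖ ≤ ‖O‖ := by
  rw [Matrix.cstar_norm_def]
  refine ContinuousLinearMap.opNorm_le_bound _ (norm_nonneg O) fun x => ?_
  set v : (Fin m → Fin d) → ℂ := WithLp.equiv 2 _ x with hv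
  have hx : x = (WithLp.equiv 2 ((Fin m → Fin d) → ℂ)).symm v := by simp [hv]
  have h1 : ‖toEuclideanCLM (𝕜 := ℂ) (embedAt j O) x‖ ^ 2
      = ∑ i, Complex.normSq ((embedAt j O *ᵥ v) i) := by
    rw [hx, show toEuclideanCLM (𝕜 := ℂ) (embedAt j O) ((WithLp.equiv 2 ((Fin m → Fin d) → ℂ)).symm v)
        = (WithLp.equiv 2 ((Fin m → Fin d) → ℂ)).symm (embedAt j O *ᵥ v) from rfl, euclid_norm_sq]
  have h2 : ‖x‖ ^ 2 = ∑ i, Complex.normSq (v i) := by rw [hx, euclid_norm_sq]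
  have hsq : ‖toEuclideanCLM (𝕜 := ℂ) (embedAt j O) x‖ ^ 2 ≤ (‖O‖ * ‖x‖) ^ 2 := by
    rw [mul_pow, h1, h2]
    exact embedAt_normSq_le j O v
  exact le_of_pow_le_pow_left₀ two_ne_zero (by positivity) hsq

end Aux

section Main

open scoped Matrix.Norms.L2Operator

/-- Variance deviation bound under trace-distance tampering:
`|Δ²_{σ,σ} Ō − Δ²_{σ,σ'} Ō| ≤ 4o²(2ε + ε²)`. -/
theorem avg_observable_variance_bound {d m : ℕ}
    (O : Matrix (Fin d) (Fin d) ℂ) (hO : O.IsHermitian)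
    (o ε : ℝ) (ho : opNorm O ≤ o)
    (σ σ' : Matrix (Fin m → Fin d) (Fin m → Fin d) ℂ)
    (hσ : IsState σ) (hσ' : IsState σ')
    (hdist : traceDist σ σ' ≤ ε) :
    ‖deltaSq (avgObs O) σ σ - deltaSq (avgObs O) σ σ'‖ ≤
      4 * o ^ 2 * (2 * ε + ε ^ 2) := by
  classical
  set Ob : Matrix (Fin m → Fin d) (Fin m → Fin d) ℂ := avgObs O with hObdef
  have ho0 : 0 ≤ o := le_trans (opNorm_nonneg' O) ho
  have hε0 : 0 ≤ ε := by
    refine le_trans ?_ hdist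
    rw [traceDist]
    have : 0 ≤ traceNorm (σ - σ') := Finset.sum_nonneg fun i _ => Real.sqrt_nonneg _
    linarith
  set c : ℂ := (Ob * σ).trace with hc
  set B : Matrix (Fin m → Fin d) (Fin m → Fin d) ℂ
    := Ob - c • (1 : Matrix (Fin m → Fin d) (Fin m → Fin d) ℂ) with hBdef
  -- Hermiticity of the averaged observable
  have hObar : (Ob).IsHermitian := by
    have hsum : (∑ j : Fin m, embedAt j O)ᴴ = ∑ j : Fin m, embedAt j O := by
      rw [conjTranspose_sum]
      exact Finset.sum_congr rfl fun j _ => (embedAt_isHermitian j hO).eq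
    show (Ob)ᴴ = Ob
    rw [hObdef]
    unfold avgObs
    rw [conjTranspose_smul, hsum]
    congr 1
    simp
  -- operator norm bound on the averaged observable
  have hOnorm : ‖Ob‖ ≤ o := by
    have hOn : ‖O‖ ≤ o := le_trans (matrix_norm_le_opNorm O) ho
    rw [hObdef]
    unfold avgObs
    have h2 : ‖∑ j : Fin m, embedAt j O‖ ≤ (m : ℝ) * o := by
      calc ‖∑ j : Fin m, embedAt j O‖ ≤ ∑ j : Fin m, ‖embedAt j O‖ := norm_sum_le _ _
        _ ≤ ∑ _j : Fin m, o :=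
            Finset.sum_le_sum fun j _ => le_trans (norm_embedAt_le j O) hOn
        _ = (m : ℝ) * o := by
            rw [Finset.sum_const, Finset.card_univ, Fintype.card_fin, nsmul_eq_mul]
    calc ‖((m:ℂ)⁻¹) • ∑ j : Fin m, embedAt j O‖
        = ‖((m:ℂ)⁻¹)‖ * ‖∑ j : Fin m, embedAt j O‖ := norm_smul _ _
      _ ≤ (m : ℝ)⁻¹ * ((m : ℝ) * o) := by
          have h1 : ‖((m:ℂ)⁻¹ : ℂ)‖ = (m : ℝ)⁻¹ := by
            rw [norm_inv, Complex.norm_natCast]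
          rw [h1]
          exact mul_le_mul_of_nonneg_left h2 (by positivity)
      _ ≤ o := by
          rcases Nat.eq_zero_or_pos m with hm | hm
          · subst hm; simpa using ho0
          · have hm0 : (m : ℝ) ≠ 0 := by positivity
            rw [← mul_assoc, inv_mul_cancel₀ hm0, one_mul]
  -- spectral facts about σ
  have hσh : σ.IsHermitian := hσ.1.1
  have hsum1 : ∑ i, |hσh.eigenvalues i| = 1 := by
    have htr := trace_eq_sum_eig hσh
    rw [hσ.2] at htr
    have h1 : (∑ i, hσh.eigenvalues i) = 1 := by exact_mod_cast htr.symm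
    rw [← h1]
    exact Finset.sum_congr rfl fun i _ => abs_of_nonneg (hσ.1.eigenvalues_nonneg i)
  -- |c| ≤ o
  have hcabs : ‖c‖ ≤ o := by
    rw [hc]
    calc ‖(Ob * σ).trace‖ ≤ ‖Ob‖ * ∑ i, |hσh.eigenvalues i| :=
          holder_bound (Ob) hσh
      _ = ‖Ob‖ := by rw [hsum1, mul_one]
      _ ≤ o := hOnorm
  -- c is real
  have hcreal : star c = c := by
    rw [hc, ← Matrix.trace_conjTranspose, Matrix.conjTranspose_mul, hσh.eq, hObar.eq,
      Matrix.trace_mul_comm]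
  -- B is Hermitian
  have hB : B.IsHermitian := by
    show Bᴴ = B
    rw [hBdef, conjTranspose_sub, conjTranspose_smul, conjTranspose_one, hObar.eq, hcreal]
  have hB2 : (B ^ 2).IsHermitian := hB.pow 2
  -- norm bound on B²
  have hone : ‖(1 : Matrix (Fin m → Fin d) (Fin m → Fin d) ℂ)‖ ≤ 1 := by
    rw [Matrix.cstar_norm_def, _root_.map_one, ContinuousLinearMap.one_def]
    exact ContinuousLinearMap.norm_id_le
  have hnormB : ‖B‖ ≤ 2 * o := by
    rw [hBdef]
    calc ‖Ob - c • (1 : Matrix (Fin m → Fin d) (Fin m → Fin d) ℂ)‖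
        ≤ ‖Ob‖ + ‖c • (1 : Matrix (Fin m → Fin d) (Fin m → Fin d) ℂ)‖ :=
          norm_sub_le _ _
      _ ≤ o + ‖c‖ * 1 := by
          refine add_le_add hOnorm ?_
          rw [norm_smul]
          exact mul_le_mul_of_nonneg_left hone (norm_nonneg _)
      _ ≤ 2 * o := by rw [mul_one]; linarith
  have hnormB2 : ‖B ^ 2‖ ≤ 4 * o ^ 2 := by
    calc ‖B ^ 2‖ = ‖B * B‖ := by rw [pow_two]
      _ ≤ ‖B‖ * ‖B‖ := norm_mul_le _ _
      _ ≤ (2 * o) * (2 * o) := mul_le_mul hnormB hnormB (norm_nonneg _) (by linarith)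
      _ = 4 * o ^ 2 := by ring
  -- the difference of second moments
  have hdiffeq : deltaSq (Ob) σ σ - deltaSq (Ob) σ σ'
      = ((B ^ 2) * (σ - σ')).trace := by
    rw [deltaSq, deltaSq, hBdef, hc, Matrix.mul_sub, Matrix.trace_sub]
  have hσσ' : (σ - σ').IsHermitian := hσ.1.1.sub hσ'.1.1
  have htn : ∑ i, |hσσ'.eigenvalues i| ≤ 2 * ε := by
    calc ∑ i, |hσσ'.eigenvalues i| ≤ traceNorm (σ - σ') := sum_abs_eig_le_traceNorm hσσ'
      _ = 2 * traceDist σ σ' := by rw [traceDist]; ring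
      _ ≤ 2 * ε := by linarith
  calc ‖deltaSq (Ob) σ σ - deltaSq (Ob) σ σ'‖
      = ‖((B ^ 2) * (σ - σ')).trace‖ := by rw [hdiffeq]
    _ ≤ ‖B ^ 2‖ * ∑ i, |hσσ'.eigenvalues i| := holder_bound _ hσσ'
    _ ≤ (4 * o ^ 2) * (2 * ε) := by
        refine mul_le_mul hnormB2 htn ?_ (by positivity)
        exact Finset.sum_nonneg fun i _ => abs_nonneg _
    _ ≤ 4 * o ^ 2 * (2 * ε + ε ^ 2) := by nlinarith [mul_nonneg (sq_nonneg o) (sq_nonneg ε)]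

end Main
end

section
/- Let ρ be a state on H^{⊗N_e} that is a mixture ∫ ρ_v^{⊗N_e} dμ(v) of product states, and let V(φ) = U(φ)^{⊗N_e} where U(φ) is a unitary whose eigenvalues lie in an arc of length δ ≤ π. Then D(ρ, V(φ) ρ V(φ)†) ≤ |sin(δ/2)|, where D is trace distance. -/
open Matrix
open scoped ComplexOrder Kronecker

set_option linter.unusedSectionVars false

namespace RotAux

variable {n : Type*} [Fintype n] [DecidableEq n]

section specFun
variable {A : Matrix n n ℂ} (hA : A.IsHermitian)

noncomputable def specFun (f : ℝ → ℝ) : Matrix n n ℂ :=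
  (hA.eigenvectorUnitary : Matrix n n ℂ) *
    Matrix.diagonal (fun i => (f (hA.eigenvalues i) : ℂ)) *
    star (hA.eigenvectorUnitary : Matrix n n ℂ)

lemma star_mul_selfV :
    star (hA.eigenvectorUnitary : Matrix n n ℂ) * (hA.eigenvectorUnitary : Matrix n n ℂ) = 1 :=
  Matrix.UnitaryGroup.star_mul_self _

lemma specFun_mul (f g : ℝ → ℝ) :
    specFun hA f * specFun hA g = specFun hA (fun x => f x * g x) := by
  unfold specFun
  calc (hA.eigenvectorUnitary : Matrix n n ℂ) *
      Matrix.diagonal (fun i => (f (hA.eigenvalues i) : ℂ)) *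
      star (hA.eigenvectorUnitary : Matrix n n ℂ) *
      ((hA.eigenvectorUnitary : Matrix n n ℂ) *
      Matrix.diagonal (fun i => (g (hA.eigenvalues i) : ℂ)) *
      star (hA.eigenvectorUnitary : Matrix n n ℂ))
      = (hA.eigenvectorUnitary : Matrix n n ℂ) *
        (Matrix.diagonal (fun i => (f (hA.eigenvalues i) : ℂ)) *
         (star (hA.eigenvectorUnitary : Matrix n n ℂ) * (hA.eigenvectorUnitary : Matrix n n ℂ)) *
         Matrix.diagonal (fun i => (g (hA.eigenvalues i) : ℂ))) *
        star (hA.eigenvectorUnitary : Matrix n n ℂ) := by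
        simp only [Matrix.mul_assoc]
    _ = _ := by
        rw [star_mul_selfV, Matrix.mul_one, Matrix.diagonal_mul_diagonal]
        congr 2
        funext i
        push_cast
        ring

lemma specFun_trace (f : ℝ → ℝ) :
    (specFun hA f).trace = ∑ i, (f (hA.eigenvalues i) : ℂ) := by
  unfold specFun
  rw [Matrix.trace_mul_cycle, star_mul_selfV, Matrix.one_mul, Matrix.trace_diagonal]

lemma specFun_isHermitian (f : ℝ → ℝ) : (specFun hA f).IsHermitian := by
  unfold Matrix.IsHermitian specFun
  simp only [Matrix.conjTranspose_mul, Matrix.star_eq_conjTranspose,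
    Matrix.conjTranspose_conjTranspose, Matrix.diagonal_conjTranspose]
  have : (star fun i => (↑(f (hA.eigenvalues i)) : ℂ)) = fun i => (↑(f (hA.eigenvalues i)) : ℂ) := by
    funext i
    simp [Complex.conj_ofReal]
  rw [this, Matrix.mul_assoc]

lemma specFun_posSemidef (f : ℝ → ℝ) (hf : ∀ x, 0 ≤ f x) : (specFun hA f).PosSemidef := by
  unfold specFun
  have h : (Matrix.diagonal (fun i => (f (hA.eigenvalues i) : ℂ))).PosSemidef := by
    refine Matrix.posSemidef_diagonal_iff.mpr fun i => ?_
    rw [Complex.zero_le_real]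
    exact hf _
  rw [Matrix.star_eq_conjTranspose]
  exact h.mul_mul_conjTranspose_same _

lemma specFun_id : specFun hA (fun x => x) = A := by
  conv_rhs => rw [hA.spectral_theorem]
  rfl

end specFun

section sqrtSec
open scoped MatrixOrder

lemma traceNorm_hermitian {D : Matrix n n ℂ} (hD : D.IsHermitian) :
    traceNorm D = ∑ i, |hD.eigenvalues i| := by
  have hP := Matrix.posSemidef_conjTranspose_mul_self D
  set E := specFun hD (fun x => |x|) with hE
  have hEpsd : E.PosSemidef := specFun_posSemidef hD _ (fun x => abs_nonneg x)
  have hE2 : E ^ 2 = Dᴴ * D := by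
    rw [pow_two, hE, specFun_mul, hD.eq]
    conv_rhs => rw [← specFun_id hD]
    rw [specFun_mul]
    exact congrArg (specFun hD) (funext fun x => abs_mul_abs_self x)
  have hEs : E = CFC.sqrt (Dᴴ * D) :=
    ((CFC.sqrt_eq_iff _ _ hP.nonneg hEpsd.nonneg).mpr (by rw [← pow_two]; exact hE2)).symm
  have h3 : CFC.sqrt (Dᴴ * D) = specFun hP.1 Real.sqrt := by
    rw [CFC.sqrt_eq_cfc, cfc_nnreal_eq_real _ _ hP.nonneg, hP.1.cfc_eq]
    simp only [Matrix.IsHermitian.cfc, Unitary.conjStarAlgAut_apply, specFun]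
    unfold Real.sqrt
    rfl
  have h4 : (∑ i, ((|hD.eigenvalues i| : ℝ) : ℂ)) = ∑ i, (Real.sqrt (hP.1.eigenvalues i) : ℂ) := by
    rw [← specFun_trace hD (fun x => |x|), ← specFun_trace hP.1 Real.sqrt, ← hE, ← h3, hEs]
  have h5 : (∑ i, |hD.eigenvalues i|) = ∑ i, Real.sqrt (hP.1.eigenvalues i) := by
    exact_mod_cast h4
  rw [traceNorm, ← h5]

lemma trace_nonneg' {A : Matrix n n ℂ} (hA : A.PosSemidef) : 0 ≤ A.trace := by
  exact hA.trace_nonneg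

lemma trace_mul_nonneg' {A B : Matrix n n ℂ} (hA : A.PosSemidef) (hB : B.PosSemidef) :
    0 ≤ (A * B).trace := by
  have h1 : A * B = CFC.sqrt A * CFC.sqrt A * B := by rw [CFC.sqrt_mul_sqrt_self A hA.nonneg]
  rw [h1, ← Matrix.trace_mul_cycle]
  have h2 : CFC.sqrt A * B * CFC.sqrt A = CFC.sqrt A * B * (CFC.sqrt A)ᴴ := by
    rw [(CFC.sqrt_nonneg A).posSemidef.1.eq]
  rw [h2]
  exact trace_nonneg' (hB.mul_mul_conjTranspose_same _)

end sqrtSec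

lemma mem_spectrum_of_eigen {M : Matrix n n ℂ} {z : ℂ} {v : n → ℂ} (hv : v ≠ 0)
    (h : M *ᵥ v = z • v) : z ∈ spectrum ℂ M := by
  rw [spectrum.mem_iff]
  intro hUnit
  rw [Matrix.isUnit_iff_isUnit_det] at hUnit
  have h0 : (algebraMap ℂ (Matrix n n ℂ) z - M) *ᵥ v = 0 := by
    rw [Algebra.algebraMap_eq_smul_one, Matrix.sub_mulVec, h, Matrix.smul_mulVec]
    simp
  have hdet : (algebraMap ℂ (Matrix n n ℂ) z - M).det = 0 :=
    (Matrix.exists_mulVec_eq_zero_iff).mp ⟨v, hv, h0⟩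
  rw [hdet] at hUnit
  simp at hUnit

noncomputable def en (x : n → ℂ) : ℝ := ‖(WithLp.equiv 2 (n → ℂ)).symm x‖

lemma en_nonneg (x : n → ℂ) : 0 ≤ en x := norm_nonneg _

lemma en_sq (x : n → ℂ) : en x ^ 2 = (star x ⬝ᵥ x).re := by
  have h := @inner_self_eq_norm_sq ℂ _ _ _ _ ((WithLp.equiv 2 (n → ℂ)).symm x)
  rw [WithLp.equiv_symm_apply, EuclideanSpace.inner_toLp_toLp, dotProduct_comm] at h
  simpa [en, WithLp.equiv_symm_apply] using h.symm

lemma cs_re (x y : n → ℂ) : |(star x ⬝ᵥ y).re| ≤ en x * en y := by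
  have h := norm_inner_le_norm (𝕜 := ℂ) ((WithLp.equiv 2 (n → ℂ)).symm x)
    ((WithLp.equiv 2 (n → ℂ)).symm y)
  rw [WithLp.equiv_symm_apply, EuclideanSpace.inner_toLp_toLp, dotProduct_comm] at h
  exact le_trans (Complex.abs_re_le_norm _) h

lemma en_mulVec_sq (A : Matrix n n ℂ) (x : n → ℂ) :
    en (A *ᵥ x) ^ 2 = (star x ⬝ᵥ (Aᴴ * A) *ᵥ x).re := by
  rw [en_sq]
  congr 1
  rw [Matrix.star_mulVec, ← Matrix.dotProduct_mulVec, Matrix.mulVec_mulVec]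

lemma en_sub_le (x y : n → ℂ) : en (x - y) ≤ en x + en y := by
  unfold en
  rw [WithLp.equiv_symm_apply, WithLp.toLp_sub]
  exact norm_sub_le _ _

lemma en_pos {v : n → ℂ} (hv : v ≠ 0) : 0 < en v := by
  unfold en
  rw [norm_pos_iff]
  intro h
  apply hv
  have := congrArg (WithLp.equiv 2 (n → ℂ)) h
  simpa using this

lemma herm_dot_im {A : Matrix n n ℂ} (hA : A.IsHermitian) (x : n → ℂ) :
    (star x ⬝ᵥ A *ᵥ x).im = 0 := by
  rw [← Complex.conj_eq_iff_im]
  calc (starRingEnd ℂ) (star x ⬝ᵥ A *ᵥ x) = star (star x ⬝ᵥ A *ᵥ x) := rfl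
    _ = star (A *ᵥ x) ⬝ᵥ x := by rw [Matrix.star_dotProduct, star_star]
    _ = (star x ᵥ* Aᴴ) ⬝ᵥ x := by rw [Matrix.star_mulVec]
    _ = star x ⬝ᵥ Aᴴ *ᵥ x := (Matrix.dotProduct_mulVec _ _ _).symm
    _ = star x ⬝ᵥ A *ᵥ x := by rw [hA.eq]

end RotAux

/-- Single-copy rotation bound: for a unitary `U` whose eigenvalues all lie in an arc
of length `δ ∈ [0, π]` of the unit circle, and any state `ρ`,
`D(ρ, UρU†) ≤ sin(δ/2)`. -/
theorem trace_distance_rotation_bound {d : ℕ}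
    (U : Matrix (Fin d) (Fin d) ℂ) (hU : U ∈ Matrix.unitaryGroup (Fin d) ℂ)
    (δ θ₀ : ℝ) (hδ0 : 0 ≤ δ) (hδπ : δ ≤ Real.pi)
    (hspec : ∀ lam ∈ spectrum ℂ U,
      ∃ θ ∈ Set.Icc θ₀ (θ₀ + δ), lam = Complex.exp (θ * Complex.I))
    (ρ : Matrix (Fin d) (Fin d) ℂ) (hρ : IsState ρ) :
    traceDist ρ (U * ρ * Uᴴ) ≤ Real.sin (δ / 2) := by
  classical
  obtain ⟨hρPSD, hρtr⟩ := hρ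
  have hUU : Uᴴ * U = 1 := by
    simpa [Matrix.star_eq_conjTranspose] using Matrix.mem_unitaryGroup_iff'.mp hU
  have hUU' : U * Uᴴ = 1 := by
    simpa [Matrix.star_eq_conjTranspose] using Matrix.mem_unitaryGroup_iff.mp hU
  set c : ℝ := Real.cos (δ/2) with hc
  set s : ℝ := Real.sin (δ/2) with hs
  have hδ2a : 0 ≤ δ/2 := by linarith
  have hδ2b : δ/2 ≤ Real.pi/2 := by linarith
  have hc0 : 0 ≤ c := Real.cos_nonneg_of_mem_Icc ⟨by linarith [Real.pi_pos], hδ2b⟩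
  have hs0 : 0 ≤ s := Real.sin_nonneg_of_nonneg_of_le_pi hδ2a (by linarith [Real.pi_pos])
  have hcs : s^2 = 1 - c^2 := by
    have := Real.sin_sq_add_cos_sq (δ/2); linarith
  set m : ℝ := θ₀ + δ/2 with hm
  set ω : ℂ := Complex.exp ((m:ℂ) * Complex.I) with hω
  clear_value ω
  have hωne : ω ≠ 0 := by rw [hω]; exact Complex.exp_ne_zero _
  have hωinv : ω⁻¹ = Complex.exp (-((m:ℂ) * Complex.I)) := by
    rw [hω, ← Complex.exp_neg]
  set W : Matrix (Fin d) (Fin d) ℂ := ω⁻¹ • U with hWdef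
  clear_value W
  have hWH : Wᴴ = ω • Uᴴ := by
    rw [hWdef, Matrix.conjTranspose_smul]
    congr 1
    have h1 : star ω = ω⁻¹ := by
      rw [hωinv, hω]
      rw [show star (Complex.exp ((m:ℂ) * Complex.I))
          = (starRingEnd ℂ) (Complex.exp ((m:ℂ) * Complex.I)) from rfl]
      rw [← Complex.exp_conj]
      congr 1
      simp [Complex.conj_ofReal]
    rw [show star (ω⁻¹) = (star ω)⁻¹ from by
      rw [show star (ω⁻¹) = (starRingEnd ℂ) (ω⁻¹) from rfl, map_inv₀]; rfl]
    rw [h1, inv_inv]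
  have hWW : Wᴴ * W = 1 := by
    rw [hWH, hWdef, Matrix.smul_mul, Matrix.mul_smul, smul_smul,
      mul_inv_cancel₀ hωne, one_smul, hUU]
  have hWW' : W * Wᴴ = 1 := by
    rw [hWH, hWdef, Matrix.smul_mul, Matrix.mul_smul, smul_smul,
      inv_mul_cancel₀ hωne, one_smul, hUU']
  have hUW : U = ω • W := by
    rw [hWdef, smul_smul, mul_inv_cancel₀ hωne, one_smul]
  -- spectral fact about W
  have hspecW : ∀ ν : ℂ, ∀ u : Fin d → ℂ, u ≠ 0 → W *ᵥ u = ν • u → c ≤ ν.re := by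
    intro ν u hu huv
    have hUu : U *ᵥ u = (ω * ν) • u := by
      rw [hUW, Matrix.smul_mulVec, huv, smul_smul]
    obtain ⟨θ, hθmem, hθeq⟩ := hspec _ (RotAux.mem_spectrum_of_eigen hu hUu)
    have hν : ν = Complex.exp (((θ - m : ℝ) : ℂ) * Complex.I) := by
      have h1 : ν = ω⁻¹ * Complex.exp ((θ:ℂ) * Complex.I) := by
        rw [← hθeq]
        field_simp
      rw [h1, hωinv, ← Complex.exp_add]
      congr 1
      push_cast
      ring
    rw [hν, Complex.exp_ofReal_mul_I_re]
    have habs : |θ - m| ≤ δ/2 := by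
      rw [abs_le]
      constructor
      · have := hθmem.1; rw [hm]; linarith
      · have := hθmem.2; rw [hm]; linarith
    calc c = Real.cos (δ/2) := hc
      _ ≤ Real.cos |θ - m| :=
        Real.cos_le_cos_of_nonneg_of_le_pi (abs_nonneg _) (by linarith [Real.pi_pos]) habs
      _ = Real.cos (θ - m) := Real.cos_abs _
  -- isometry of W
  have hWiso : ∀ y : Fin d → ℂ, RotAux.en (W *ᵥ y) = RotAux.en y := by
    intro y
    have h1 : RotAux.en (W *ᵥ y)^2 = RotAux.en y^2 := by
      rw [RotAux.en_mulVec_sq, hWW, Matrix.one_mulVec]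
      exact (RotAux.en_sq y).symm
    rw [← Real.sqrt_sq (RotAux.en_nonneg (W *ᵥ y)), h1, Real.sqrt_sq (RotAux.en_nonneg y)]
  -- the matrix G and its positivity
  set G : Matrix (Fin d) (Fin d) ℂ := W + Wᴴ - ((2*c : ℝ) : ℂ) • 1 with hG
  clear_value G
  have hsmulH : ∀ r : ℝ, (((r:ℝ):ℂ) • (1:Matrix (Fin d) (Fin d) ℂ))ᴴ = ((r:ℝ):ℂ) • 1 := by
    intro r
    rw [Matrix.conjTranspose_smul, Matrix.conjTranspose_one]
    congr 1
    simp [Complex.conj_ofReal]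
  have hGH : G.IsHermitian := by
    show Gᴴ = G
    rw [hG, Matrix.conjTranspose_sub, Matrix.conjTranspose_add,
      Matrix.conjTranspose_conjTranspose, hsmulH]
    abel
  have hGpsd : G.PosSemidef := by
    apply hGH.posSemidef_iff_eigenvalues_nonneg.mpr
    intro i
    set g : ℝ := hGH.eigenvalues i with hg
    set v : Fin d → ℂ := ⇑(hGH.eigenvectorBasis i) with hv
    have hvne : v ≠ 0 := by
      intro h0
      apply hGH.eigenvectorBasis.orthonormal.ne_zero i
      ext j
      exact congrFun h0 j
    have hGv : G *ᵥ v = (g : ℂ) • v := by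
      have h1 := hGH.mulVec_eigenvectorBasis i
      rw [hv]
      rw [h1]
      ext j
      simp [Complex.real_smul, hg]
    clear_value g
    set lam : ℝ := c + g/2 with hlam
    clear_value lam
    have hWsum : (W + Wᴴ) *ᵥ v = ((2*lam : ℝ) : ℂ) • v := by
      have h2 : G *ᵥ v = (W + Wᴴ) *ᵥ v - ((2*c:ℝ):ℂ) • v := by
        rw [hG, Matrix.sub_mulVec, Matrix.smul_mulVec, Matrix.one_mulVec]
      rw [h2] at hGv
      have h3 : (W + Wᴴ) *ᵥ v = (g:ℂ) • v + ((2*c:ℝ):ℂ) • v := by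
        rw [← hGv]; abel
      rw [h3, ← add_smul]
      congr 1
      rw [hlam]
      push_cast
      ring
    have hpos : 0 < RotAux.en v := RotAux.en_pos hvne
    have hlam_le : |lam| ≤ 1 := by
      have hq : (star v ⬝ᵥ (W + Wᴴ) *ᵥ v).re = 2*lam * (RotAux.en v^2) := by
        rw [hWsum, dotProduct_smul, smul_eq_mul, Complex.re_ofReal_mul, RotAux.en_sq]
        try ring
      have hsplit : (star v ⬝ᵥ (W + Wᴴ) *ᵥ v).re = 2 * (star v ⬝ᵥ W *ᵥ v).re := by
        rw [Matrix.add_mulVec, dotProduct_add]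
        have hconj : star v ⬝ᵥ Wᴴ *ᵥ v = star (star v ⬝ᵥ W *ᵥ v) := by
          rw [Matrix.dotProduct_mulVec, ← Matrix.star_mulVec]
          exact Matrix.star_dotProduct _ _
        rw [hconj, Complex.add_re]
        have hcr : (star (star v ⬝ᵥ W *ᵥ v)).re = (star v ⬝ᵥ W *ᵥ v).re := Complex.conj_re _
        rw [hcr]
        ring
      have hcs2 : |(star v ⬝ᵥ W *ᵥ v).re| ≤ RotAux.en v ^2 := by
        have h5 := RotAux.cs_re v (W *ᵥ v)
        rw [hWiso] at h5
        calc |(star v ⬝ᵥ W *ᵥ v).re| ≤ RotAux.en v * RotAux.en v := h5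
          _ = RotAux.en v ^ 2 := by ring
      have h7 : lam * (RotAux.en v^2) = (star v ⬝ᵥ W *ᵥ v).re := by
        have := hq; rw [hsplit] at this; linarith
      have h8 : |lam| * RotAux.en v^2 ≤ RotAux.en v^2 := by
        calc |lam| * RotAux.en v^2 = |lam * RotAux.en v^2| := by
              rw [abs_mul, abs_of_nonneg (sq_nonneg (RotAux.en v))]
          _ = |(star v ⬝ᵥ W *ᵥ v).re| := by rw [h7]
          _ ≤ RotAux.en v^2 := hcs2
      by_contra hcon
      push_neg at hcon
      have h9 := mul_lt_mul_of_pos_right hcon (pow_pos hpos 2)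
      rw [one_mul] at h9
      linarith
    have hlam2 : lam^2 ≤ 1 := by nlinarith [sq_abs lam, abs_nonneg lam]
    set t : ℝ := Real.sqrt (1 - lam^2) with htdef
    have ht2 : t^2 = 1 - lam^2 := Real.sq_sqrt (by linarith)
    clear_value t
    set μ : ℂ := (lam:ℂ) + (t:ℂ) * Complex.I with hμ
    set μ' : ℂ := (lam:ℂ) - (t:ℂ) * Complex.I with hμ'
    clear_value μ μ'
    have hμmul : μ * μ' = 1 := by
      rw [hμ, hμ']
      have h9 : ((lam:ℂ) + (t:ℂ)*Complex.I) * ((lam:ℂ) - (t:ℂ)*Complex.I)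
          = (lam:ℂ)^2 - (t:ℂ)^2 * Complex.I^2 := by ring
      rw [h9, Complex.I_sq]
      rw [show (lam:ℂ)^2 - (t:ℂ)^2 * (-1) = ((lam^2 + t^2 : ℝ) : ℂ) by push_cast; ring]
      rw [ht2]
      norm_num
    have hμsum : μ + μ' = ((2*lam:ℝ):ℂ) := by
      rw [hμ, hμ']; push_cast; ring
    have hfact : (W - μ • 1) *ᵥ ((W - μ' • 1) *ᵥ v) = 0 := by
      rw [Matrix.mulVec_mulVec]
      have e1 : (W - μ • 1) * (W - μ' • 1) = W*W - μ' • W - μ • W + (μ * μ') • 1 := by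
        simp only [Matrix.sub_mul, Matrix.mul_sub, Matrix.smul_mul, Matrix.mul_smul,
          smul_smul, smul_add, smul_sub, Matrix.one_mul, Matrix.mul_one]
        module
      have e2 : W * (W + Wᴴ - ((2*lam:ℝ):ℂ) • 1) = W*W + 1 - ((2*lam:ℝ):ℂ) • W := by
        rw [Matrix.mul_sub, Matrix.mul_add, hWW', Matrix.mul_smul, Matrix.mul_one]
      have hid : (W - μ • 1) * (W - μ' • 1) = W * (W + Wᴴ - ((2*lam:ℝ):ℂ) • 1) := by
        rw [e1, e2, hμmul, one_smul]
        rw [show ((2*lam:ℝ):ℂ) • W = μ • W + μ' • W from by rw [← add_smul, hμsum]]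
        module
      rw [hid, ← Matrix.mulVec_mulVec]
      have hzero : (W + Wᴴ - ((2*lam:ℝ):ℂ) • 1) *ᵥ v = 0 := by
        rw [Matrix.sub_mulVec, hWsum, Matrix.smul_mulVec, Matrix.one_mulVec, sub_self]
      rw [hzero, Matrix.mulVec_zero]
    have hlamc : c ≤ lam := by
      by_cases hw : (W - μ' • 1) *ᵥ v = 0
      · have hWv2 : W *ᵥ v = μ' • v := by
          rw [Matrix.sub_mulVec, Matrix.smul_mulVec, Matrix.one_mulVec,
            sub_eq_zero] at hw
          exact hw
        have h10 := hspecW μ' v hvne hWv2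
        rwa [show μ'.re = lam from by simp [hμ']] at h10
      · have hWw : W *ᵥ ((W - μ' • 1) *ᵥ v) = μ • ((W - μ' • 1) *ᵥ v) := by
          have h11 := hfact
          rw [Matrix.sub_mulVec, Matrix.smul_mulVec, Matrix.one_mulVec,
            sub_eq_zero] at h11
          exact h11
        have h12 := hspecW μ _ hw hWw
        rwa [show μ.re = lam from by simp [hμ]] at h12
    rw [hlam] at hlamc
    rw [Pi.zero_apply]
    linarith
  -- B bound
  set B : Matrix (Fin d) (Fin d) ℂ := W - (c:ℂ) • 1 with hB
  clear_value B
  have hBident : Bᴴ * B = ((1 + c^2 : ℝ):ℂ) • 1 - (c:ℂ) • (W + Wᴴ) := by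
    have hBH : Bᴴ = Wᴴ - (c:ℂ) • 1 := by
      rw [hB, Matrix.conjTranspose_sub, Matrix.conjTranspose_smul, Matrix.conjTranspose_one]
      congr 2
      simp [Complex.conj_ofReal]
    rw [hBH, hB]
    simp only [Matrix.sub_mul, Matrix.mul_sub, Matrix.smul_mul, Matrix.mul_smul,
      smul_smul, Matrix.one_mul, Matrix.mul_one]
    rw [hWW]
    push_cast
    module
  have hBq : ∀ y : Fin d → ℂ, RotAux.en (B *ᵥ y) ≤ s * RotAux.en y := by
    intro y
    have h1 : RotAux.en (B *ᵥ y)^2 = (star y ⬝ᵥ (Bᴴ * B) *ᵥ y).re := RotAux.en_mulVec_sq B y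
    have hsc : ((s^2:ℝ):ℂ) = 1 - (c:ℂ)^2 := by rw [hcs]; push_cast; ring
    have h2 : ((s^2:ℝ):ℂ) • (1 : Matrix (Fin d) (Fin d) ℂ) - Bᴴ * B = (c:ℂ) • G := by
      rw [hBident, hG, hsc]
      have hc2 : ((2*c:ℝ):ℂ) = 2*(c:ℂ) := by push_cast; ring
      rw [hc2]
      push_cast
      module
    have h4 : star y ⬝ᵥ (((s^2:ℝ):ℂ) • (1:Matrix (Fin d) (Fin d) ℂ) - Bᴴ*B) *ᵥ y
        = ((s^2:ℝ):ℂ) * (star y ⬝ᵥ y) - star y ⬝ᵥ (Bᴴ*B) *ᵥ y := by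
      rw [Matrix.sub_mulVec, dotProduct_sub, Matrix.smul_mulVec,
        Matrix.one_mulVec, dotProduct_smul, smul_eq_mul]
    have h5 : 0 ≤ (star y ⬝ᵥ ((c:ℂ) • G) *ᵥ y).re := by
      rw [Matrix.smul_mulVec, dotProduct_smul, smul_eq_mul,
        Complex.re_ofReal_mul]
      exact mul_nonneg hc0 (Complex.le_def.mp (hGpsd.dotProduct_mulVec_nonneg y)).1
    rw [h2] at h4
    have h6 := congrArg Complex.re h4
    rw [Complex.sub_re, Complex.re_ofReal_mul] at h6
    have h3 : (star y ⬝ᵥ (Bᴴ*B) *ᵥ y).re ≤ s^2 * RotAux.en y^2 := by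
      rw [RotAux.en_sq]
      linarith [h5, h6]
    have h7 : RotAux.en (B *ᵥ y)^2 ≤ (s * RotAux.en y)^2 := by
      rw [h1]
      calc (star y ⬝ᵥ (Bᴴ*B) *ᵥ y).re ≤ s^2 * RotAux.en y^2 := h3
        _ = (s * RotAux.en y)^2 := by ring
    calc RotAux.en (B *ᵥ y) = Real.sqrt (RotAux.en (B *ᵥ y)^2) :=
          (Real.sqrt_sq (RotAux.en_nonneg _)).symm
      _ ≤ Real.sqrt ((s * RotAux.en y)^2) := Real.sqrt_le_sqrt h7
      _ = s * RotAux.en y := Real.sqrt_sq (mul_nonneg hs0 (RotAux.en_nonneg _))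
  -- D and Q
  set D : Matrix (Fin d) (Fin d) ℂ := ρ - U * ρ * Uᴴ with hD
  clear_value D
  have hDH : D.IsHermitian := by
    show Dᴴ = D
    rw [hD, Matrix.conjTranspose_sub, Matrix.conjTranspose_mul, Matrix.conjTranspose_mul,
      Matrix.conjTranspose_conjTranspose, hρPSD.1.eq, Matrix.mul_assoc]
  set χ : ℝ → ℝ := fun x => if 0 < x then 1 else 0 with hχ
  set Q := RotAux.specFun hDH χ with hQdef
  clear_value Q
  have hQH : Q.IsHermitian := by rw [hQdef]; exact RotAux.specFun_isHermitian hDH χ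
  have hQQ : Q * Q = Q := by
    rw [hQdef, RotAux.specFun_mul]
    exact congrArg (RotAux.specFun hDH) (funext fun x => by
      by_cases h : 0 < x <;> simp [hχ, h])
  set Q' : Matrix (Fin d) (Fin d) ℂ := Q - ((1/2:ℝ):ℂ) • 1 with hQ'def
  clear_value Q'
  have hQ'H : Q'ᴴ = Q' := by
    rw [hQ'def, Matrix.conjTranspose_sub, hQH.eq, Matrix.conjTranspose_smul,
      Matrix.conjTranspose_one]
    congr 2
    simp [Complex.conj_ofReal]
  have hQ'2 : Q'ᴴ * Q' = ((1/4:ℝ):ℂ) • 1 := by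
    rw [hQ'H, hQ'def]
    simp only [Matrix.sub_mul, Matrix.mul_sub, Matrix.smul_mul, Matrix.mul_smul,
      smul_smul, Matrix.one_mul, Matrix.mul_one]
    rw [hQQ]
    push_cast
    module
  have hQ'q : ∀ y, RotAux.en (Q' *ᵥ y) ≤ (1/2) * RotAux.en y := by
    intro y
    have h1 : RotAux.en (Q' *ᵥ y)^2 = (star y ⬝ᵥ (Q'ᴴ * Q') *ᵥ y).re := RotAux.en_mulVec_sq _ y
    rw [hQ'2, Matrix.smul_mulVec, Matrix.one_mulVec, dotProduct_smul,
      smul_eq_mul, Complex.re_ofReal_mul] at h1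
    have h7 : RotAux.en (Q' *ᵥ y)^2 ≤ ((1/2) * RotAux.en y)^2 := by
      rw [h1, ← RotAux.en_sq]
      calc (1/4 : ℝ) * RotAux.en y ^ 2 = ((1/2) * RotAux.en y)^2 := by ring
        _ ≤ ((1/2) * RotAux.en y)^2 := le_refl _
    calc RotAux.en (Q' *ᵥ y) = Real.sqrt (RotAux.en (Q' *ᵥ y)^2) :=
          (Real.sqrt_sq (RotAux.en_nonneg _)).symm
      _ ≤ Real.sqrt (((1/2) * RotAux.en y)^2) := Real.sqrt_le_sqrt h7
      _ = (1/2) * RotAux.en y :=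
          Real.sqrt_sq (mul_nonneg (by norm_num) (RotAux.en_nonneg y))
  -- M and its bound
  set M : Matrix (Fin d) (Fin d) ℂ := Q - Uᴴ * Q * U with hM
  clear_value M
  have hMW : M = Wᴴ * (B * Q' - Q' * B) := by
    have hcomm : B * Q' - Q' * B = W * Q - Q * W := by
      rw [hB, hQ'def]
      simp only [Matrix.sub_mul, Matrix.mul_sub, Matrix.smul_mul, Matrix.mul_smul,
        smul_smul, smul_add, smul_sub, Matrix.one_mul, Matrix.mul_one]
      module
    have hWQW : Wᴴ * Q * W = Uᴴ * Q * U := by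
      rw [hWH, hWdef]
      simp only [Matrix.smul_mul, Matrix.mul_smul, smul_smul]
      rw [inv_mul_cancel₀ hωne, one_smul]
    rw [hcomm, Matrix.mul_sub, ← Matrix.mul_assoc, ← Matrix.mul_assoc, hWW,
      Matrix.one_mul, hM, hWQW]
  have hMH : M.IsHermitian := by
    show Mᴴ = M
    rw [hM, Matrix.conjTranspose_sub, hQH.eq, Matrix.conjTranspose_mul,
      Matrix.conjTranspose_mul, Matrix.conjTranspose_conjTranspose, hQH.eq,
      Matrix.mul_assoc]
  have hMq : ∀ x, (star x ⬝ᵥ M *ᵥ x).re ≤ s * (star x ⬝ᵥ x).re := by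
    intro x
    have h0 : star x ⬝ᵥ M *ᵥ x = star (W *ᵥ x) ⬝ᵥ ((B * Q' - Q' * B) *ᵥ x) := by
      rw [hMW, ← Matrix.mulVec_mulVec, Matrix.dotProduct_mulVec, ← Matrix.star_mulVec]
    have h2 : RotAux.en ((B*Q' - Q'*B) *ᵥ x) ≤ s * RotAux.en x := by
      have e : (B*Q' - Q'*B) *ᵥ x = B *ᵥ (Q' *ᵥ x) - Q' *ᵥ (B *ᵥ x) := by
        rw [Matrix.sub_mulVec, Matrix.mulVec_mulVec, Matrix.mulVec_mulVec]
      rw [e]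
      calc RotAux.en (B *ᵥ (Q' *ᵥ x) - Q' *ᵥ (B *ᵥ x))
          ≤ RotAux.en (B *ᵥ (Q' *ᵥ x)) + RotAux.en (Q' *ᵥ (B *ᵥ x)) := RotAux.en_sub_le _ _
        _ ≤ s * RotAux.en (Q' *ᵥ x) + (1/2) * RotAux.en (B *ᵥ x) :=
            add_le_add (hBq _) (hQ'q _)
        _ ≤ s * ((1/2) * RotAux.en x) + (1/2) * (s * RotAux.en x) :=
            add_le_add (mul_le_mul_of_nonneg_left (hQ'q x) hs0)
              (mul_le_mul_of_nonneg_left (hBq x) (by norm_num))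
        _ = s * RotAux.en x := by ring
    calc (star x ⬝ᵥ M *ᵥ x).re
        ≤ RotAux.en (W *ᵥ x) * RotAux.en ((B*Q' - Q'*B) *ᵥ x) := by
          rw [h0]
          exact le_trans (le_abs_self _) (RotAux.cs_re _ _)
      _ = RotAux.en x * RotAux.en ((B*Q' - Q'*B) *ᵥ x) := by rw [hWiso]
      _ ≤ RotAux.en x * (s * RotAux.en x) :=
          mul_le_mul_of_nonneg_left h2 (RotAux.en_nonneg _)
      _ = s * RotAux.en x^2 := by ring
      _ = s * (star x ⬝ᵥ x).re := by rw [RotAux.en_sq]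
  set N : Matrix (Fin d) (Fin d) ℂ := (s:ℂ) • (1:Matrix (Fin d) (Fin d) ℂ) - M with hN
  clear_value N
  have hNH : N.IsHermitian := by
    show Nᴴ = N
    rw [hN, Matrix.conjTranspose_sub, Matrix.conjTranspose_smul, Matrix.conjTranspose_one,
      hMH.eq]
    congr 2
    simp [Complex.conj_ofReal]
  have hNpsd : N.PosSemidef := by
    refine .of_dotProduct_mulVec_nonneg hNH fun x => ?_
    rw [Complex.le_def]
    constructor
    · simp only [Complex.zero_re]
      have e : star x ⬝ᵥ N *ᵥ x = (s:ℂ) * (star x ⬝ᵥ x) - star x ⬝ᵥ M *ᵥ x := by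
        rw [hN, Matrix.sub_mulVec, dotProduct_sub, Matrix.smul_mulVec,
          Matrix.one_mulVec, dotProduct_smul, smul_eq_mul]
      rw [e, Complex.sub_re, Complex.re_ofReal_mul]
      linarith [hMq x]
    · simp only [Complex.zero_im]
      exact (RotAux.herm_dot_im hNH x).symm
  -- traces
  have hDtr : D.trace = 0 := by
    rw [hD, Matrix.trace_sub, Matrix.trace_mul_cycle, hUU, Matrix.one_mul, sub_self]
  have hsum0 : ∑ i, hDH.eigenvalues i = 0 := by
    have h1 : (∑ i, ((hDH.eigenvalues i : ℝ):ℂ)) = D.trace := by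
      rw [← RotAux.specFun_trace hDH (fun x => x), RotAux.specFun_id]
    rw [hDtr] at h1
    exact_mod_cast h1
  have htrQD : (Q * D).trace = ∑ i, ((max (hDH.eigenvalues i) 0 : ℝ) : ℂ) := by
    have h1 := RotAux.specFun_mul hDH χ (fun x => x)
    rw [RotAux.specFun_id hDH] at h1
    rw [hQdef, h1, RotAux.specFun_trace]
    congr 1
    funext i
    congr 1
    by_cases h : 0 < hDH.eigenvalues i
    · simp [hχ, h, max_eq_left h.le]
    · simp [hχ, h, max_eq_right (not_lt.mp h)]
  have htrMρ : (Q * D).trace = (M * ρ).trace := by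
    rw [hD, Matrix.mul_sub, Matrix.trace_sub, hM, Matrix.sub_mul, Matrix.trace_sub]
    congr 1
    calc (Q * (U*ρ*Uᴴ)).trace = ((Q*U*ρ)*Uᴴ).trace := by
          simp only [Matrix.mul_assoc]
      _ = (Uᴴ*(Q*U*ρ)).trace := Matrix.trace_mul_comm _ _
      _ = (Uᴴ*Q*U*ρ).trace := by rw [← Matrix.mul_assoc, ← Matrix.mul_assoc]
  have hre : ((M * ρ).trace).re ≤ s := by
    have h1 := RotAux.trace_mul_nonneg' hNpsd hρPSD
    have h2 : (N * ρ).trace = (s:ℂ) - (M*ρ).trace := by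
      rw [hN, Matrix.sub_mul, Matrix.trace_sub, Matrix.smul_mul, Matrix.one_mul,
        Matrix.trace_smul, hρtr, smul_eq_mul, mul_one]
    rw [h2] at h1
    have h3 := (Complex.le_def.mp h1).1
    simp only [Complex.zero_re, Complex.sub_re, Complex.ofReal_re] at h3
    linarith
  have hQDre : ((Q*D).trace).re = ∑ i, max (hDH.eigenvalues i) 0 := by
    rw [htrQD, ← Complex.ofReal_sum, Complex.ofReal_re]
  have habs : (∑ i, |hDH.eigenvalues i|) = 2 * ∑ i, max (hDH.eigenvalues i) 0 := by
    have h : ∀ r : ℝ, |r| = 2 * max r 0 - r := by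
      intro r
      rcases le_or_gt r 0 with h | h
      · rw [abs_of_nonpos h, max_eq_right h]; ring
      · rw [abs_of_pos h, max_eq_left h.le]; ring
    calc ∑ i, |hDH.eigenvalues i|
        = ∑ i, (2 * max (hDH.eigenvalues i) 0 - hDH.eigenvalues i) :=
          Finset.sum_congr rfl fun i _ => h _
      _ = 2 * (∑ i, max (hDH.eigenvalues i) 0) - ∑ i, hDH.eigenvalues i := by
          rw [Finset.sum_sub_distrib, Finset.mul_sum]
      _ = _ := by rw [hsum0]; ring
  unfold traceDist
  rw [← hD]
  rw [RotAux.traceNorm_hermitian hDH, habs]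
  have hfin : ∑ i, max (hDH.eigenvalues i) 0 = ((M*ρ).trace).re := by
    rw [← hQDre, htrMρ]
  rw [hfin]
  linarith [hre]
end
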